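/- If C follows a hypergeometric distribution counting successes when drawing n/2 samples without replacement from a population of size n containing c successes (n even), then for every a > 0, P(C > c/2 + a) ≤ exp(-2a²/c). -/

import Mathlib

open Finset

noncomputable def hgA (N K m k : ℕ) : ℝ :=
  (m.choose k : ℝ) * (K.descFactorial k : ℝ) * ((N - K).descFactorial (m - k) : ℝ)

private lemma dfacR_mul (b s : ℕ) :
    (b.descFactorial s : ℝ) * ((b : ℝ) - s) = (b.descFactorial (s + 1) : ℝ) := by
  rcases le_or_gt s b with h | h
  · rw [Nat.descFactorial_succ]; push_cast [h]; ring
  · rw [Nat.descFactorial_eq_zero_iff_lt.2 h, Nat.descFactorial_eq_zero_iff_lt.2 (by omega)]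
    simp

private lemma hgA_rec_sum (N K m : ℕ) (t : ℝ) :
    ∑ k ∈ range (m + 2), hgA N K (m + 1) k * t ^ k
      = ∑ k ∈ range (m + 1), hgA N K m k *
          (((((N - K : ℕ)) : ℝ) - (((m - k : ℕ)) : ℝ)) * t ^ k + ((K : ℝ) - k) * t ^ (k + 1)) := by
  have hGk : ∀ k : ℕ, hgA N K m k * ((((N - K : ℕ)) : ℝ) - (((m - k : ℕ)) : ℝ)) * t ^ k
      = hgA N K m k * ((((N - K : ℕ)) : ℝ) - (((m - k : ℕ)) : ℝ)) * t ^ k := fun _ => rfl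
  set G : ℕ → ℝ := fun k =>
    hgA N K m k * ((((N - K : ℕ)) : ℝ) - (((m - k : ℕ)) : ℝ)) * t ^ k with hG
  have hGdef : ∀ k, G k = hgA N K m k * ((((N - K : ℕ)) : ℝ) - (((m - k : ℕ)) : ℝ)) * t ^ k :=
    fun _ => rfl
  have step1 : ∀ j ∈ range (m + 1),
      hgA N K (m + 1) (j + 1) * t ^ (j + 1)
        = G (j + 1) + hgA N K m j * (((K : ℝ) - j) * t ^ (j + 1)) := by
    intro j hj
    rw [mem_range] at hj
    have pascal : ((m + 1).choose (j + 1) : ℝ) = (m.choose (j + 1) : ℝ) + (m.choose j : ℝ) := by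
      rw [Nat.choose_succ_succ]; push_cast; ring
    have hsub : m + 1 - (j + 1) = m - j := by omega
    have e1 : hgA N K (m + 1) (j + 1)
        = (m.choose (j + 1) : ℝ) * (K.descFactorial (j + 1) : ℝ)
            * ((N - K).descFactorial (m - j) : ℝ)
          + (m.choose j : ℝ) * (K.descFactorial (j + 1) : ℝ)
            * ((N - K).descFactorial (m - j) : ℝ) := by
      unfold hgA; rw [hsub, pascal]; ring
    have e2 : (m.choose j : ℝ) * (K.descFactorial (j + 1) : ℝ)
        * ((N - K).descFactorial (m - j) : ℝ)
        = hgA N K m j * ((K : ℝ) - j) := by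
      unfold hgA; rw [← dfacR_mul K j]; ring
    have e3 : (m.choose (j + 1) : ℝ) * (K.descFactorial (j + 1) : ℝ)
        * ((N - K).descFactorial (m - j) : ℝ) * t ^ (j + 1)
        = G (j + 1) := by
      rw [hGdef]
      unfold hgA
      rcases Nat.lt_or_ge j m with hlt | hge
      · have h4 : m - (j + 1) + 1 = m - j := by omega
        rw [← h4, ← dfacR_mul (N - K) (m - (j + 1))]; ring
      · have hjm' : j = m := by omega
        subst hjm'
        rw [Nat.choose_succ_self]; simp
    rw [e1, add_mul, e3, e2]; ring
  have hG0 : hgA N K (m + 1) 0 * t ^ 0 = G 0 := by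
    rw [hGdef]
    unfold hgA
    simp only [Nat.sub_zero, Nat.choose_zero_right, Nat.descFactorial_zero, pow_zero,
      Nat.cast_one, one_mul, mul_one]
    rw [← dfacR_mul (N - K) m]
  rw [Finset.sum_range_succ']
  rw [Finset.sum_congr rfl step1, hG0, Finset.sum_add_distrib]
  have collapse : (∑ j ∈ range (m + 1), G (j + 1)) + G 0 = ∑ k ∈ range (m + 1), G k := by
    rw [← Finset.sum_range_succ', Finset.sum_range_succ]
    have hlast : G (m + 1) = 0 := by
      rw [hGdef]
      unfold hgA
      rw [Nat.choose_succ_self]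
      simp
    rw [hlast, add_zero]
  calc (∑ j ∈ range (m + 1), G (j + 1))
        + (∑ j ∈ range (m + 1), hgA N K m j * (((K : ℝ) - j) * t ^ (j + 1)))
        + G 0
      = (∑ k ∈ range (m + 1), G k)
        + ∑ j ∈ range (m + 1), hgA N K m j * (((K : ℝ) - j) * t ^ (j + 1)) := by
        rw [← collapse]; ring
    _ = ∑ k ∈ range (m + 1), hgA N K m k *
          (((((N - K : ℕ)) : ℝ) - (((m - k : ℕ)) : ℝ)) * t ^ k + ((K : ℝ) - k) * t ^ (k + 1)) := by
        rw [← Finset.sum_add_distrib]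
        apply Finset.sum_congr rfl; intro k hk
        rw [hGdef]; ring

private lemma hgA_nonneg (N K m k : ℕ) : 0 ≤ hgA N K m k := by
  unfold hgA; positivity

private lemma vandermonde_nat (N K m : ℕ) (hK : K ≤ N) :
    ∑ k ∈ range (m + 1), m.choose k * K.descFactorial k * ((N - K).descFactorial (m - k))
      = N.descFactorial m := by
  have h1 : ∀ k ∈ range (m + 1),
      m.choose k * K.descFactorial k * ((N - K).descFactorial (m - k))
        = Nat.factorial m * (K.choose k * (N - K).choose (m - k)) := by
    intro k hk
    rw [mem_range] at hk
    have hk' : k ≤ m := by omega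
    rw [Nat.descFactorial_eq_factorial_mul_choose, Nat.descFactorial_eq_factorial_mul_choose,
      ← Nat.choose_mul_factorial_mul_factorial hk']
    ring
  rw [Finset.sum_congr rfl h1, ← Finset.mul_sum]
  have hv : (K + (N - K)).choose m = ∑ k ∈ range (m + 1), K.choose k * (N - K).choose (m - k) := by
    rw [Nat.add_choose_eq, Finset.Nat.sum_antidiagonal_eq_sum_range_succ_mk]
  have hKN : K + (N - K) = N := by omega
  rw [← hv, hKN, Nat.descFactorial_eq_factorial_mul_choose]

private lemma mean_nat (N K m : ℕ) (hK : K ≤ N) :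
    N * ∑ k ∈ range (m + 1),
        k * (m.choose k * K.descFactorial k * ((N - K).descFactorial (m - k)))
      = K * m * N.descFactorial m := by
  rcases Nat.eq_zero_or_pos m with rfl | hm
  · simp
  rcases Nat.eq_zero_or_pos K with rfl | hKpos
  · have : ∀ k ∈ range (m + 1),
        k * (m.choose k * Nat.descFactorial 0 k * ((N - 0).descFactorial (m - k))) = 0 := by
      intro k _
      rcases k with _ | k
      · simp
      · simp [Nat.descFactorial]
    rw [Finset.sum_eq_zero this]; simp
  obtain ⟨m', rfl⟩ : ∃ m', m = m' + 1 := ⟨m - 1, by omega⟩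
  obtain ⟨K', rfl⟩ : ∃ K', K = K' + 1 := ⟨K - 1, by omega⟩
  obtain ⟨N', rfl⟩ : ∃ N', N = N' + 1 := ⟨N - 1, by omega⟩
  rw [Finset.sum_range_succ']
  have h0 : (0 : ℕ) * ((m' + 1).choose 0 * (K' + 1).descFactorial 0
      * ((N' + 1 - (K' + 1)).descFactorial (m' + 1 - 0))) = 0 := by simp
  rw [h0, add_zero]
  have hterm : ∀ j ∈ range (m' + 1),
      (j + 1) * ((m' + 1).choose (j + 1) * (K' + 1).descFactorial (j + 1)
        * ((N' + 1 - (K' + 1)).descFactorial (m' + 1 - (j + 1))))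
      = ((m' + 1) * (K' + 1))
        * (m'.choose j * K'.descFactorial j * ((N' - K').descFactorial (m' - j))) := by
    intro j hj
    have hc : (j + 1) * (m' + 1).choose (j + 1) = (m' + 1) * m'.choose j := by
      rw [mul_comm (j+1), Nat.add_one_mul_choose_eq m' j, mul_comm]
    have hd : (K' + 1).descFactorial (j + 1) = (K' + 1) * K'.descFactorial j :=
      Nat.succ_descFactorial_succ K' j
    have hsub : N' + 1 - (K' + 1) = N' - K' := by omega
    have hsub2 : m' + 1 - (j + 1) = m' - j := by omega
    rw [hd, hsub, hsub2]
    calc (j + 1) * ((m' + 1).choose (j + 1) * ((K' + 1) * K'.descFactorial j)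
          * ((N' - K').descFactorial (m' - j)))
        = ((j + 1) * (m' + 1).choose (j + 1)) * ((K' + 1) * K'.descFactorial j)
          * ((N' - K').descFactorial (m' - j)) := by ring
      _ = ((m' + 1) * m'.choose j) * ((K' + 1) * K'.descFactorial j)
          * ((N' - K').descFactorial (m' - j)) := by rw [hc]
      _ = ((m' + 1) * (K' + 1))
          * (m'.choose j * K'.descFactorial j * ((N' - K').descFactorial (m' - j))) := by ring
  rw [Finset.sum_congr rfl hterm, ← Finset.mul_sum,
    vandermonde_nat N' K' m' (by omega)]
  rw [Nat.succ_descFactorial_succ]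
  ring


private lemma cheb_sum (s : Finset ℕ) (w : ℕ → ℝ) (hw : ∀ i ∈ s, 0 ≤ w i)
    (t : ℝ) (ht : 1 ≤ t) :
    (∑ k ∈ s, w k * k) * (∑ k ∈ s, w k * t ^ k)
      ≤ (∑ k ∈ s, w k * (k * t ^ k)) * (∑ k ∈ s, w k) := by
  have key : 0 ≤ ∑ j ∈ s, ∑ k ∈ s, w j * w k * (((k : ℝ) - j) * (t ^ k - t ^ j)) := by
    apply Finset.sum_nonneg; intro j hj
    apply Finset.sum_nonneg; intro k hk
    apply mul_nonneg (mul_nonneg (hw j hj) (hw k hk))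
    rcases le_total j k with h | h
    · apply mul_nonneg
      · simp only [sub_nonneg]; exact_mod_cast h
      · simp only [sub_nonneg]; exact pow_le_pow_right₀ ht h
    · have h1 : ((k:ℝ) - j) ≤ 0 := by simp only [sub_nonpos]; exact_mod_cast h
      have h2 : (t ^ k - t ^ j) ≤ 0 := by
        simp only [sub_nonpos]; exact pow_le_pow_right₀ ht h
      exact mul_nonneg_of_nonpos_of_nonpos h1 h2
  have expand : ∑ j ∈ s, ∑ k ∈ s, w j * w k * (((k : ℝ) - j) * (t ^ k - t ^ j))
      = 2 * ((∑ k ∈ s, w k * (k * t ^ k)) * (∑ k ∈ s, w k)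
        - (∑ k ∈ s, w k * k) * (∑ k ∈ s, w k * t ^ k)) := by
    have hpt : ∀ j ∈ s, ∑ k ∈ s, w j * w k * (((k : ℝ) - j) * (t ^ k - t ^ j))
        = w j * (∑ k ∈ s, w k * (k * t ^ k))
          - (w j * t ^ j) * (∑ k ∈ s, w k * k)
          - (w j * j) * (∑ k ∈ s, w k * t ^ k)
          + (w j * (j * t ^ j)) * (∑ k ∈ s, w k) := by
      intro j hj
      rw [Finset.mul_sum, Finset.mul_sum, Finset.mul_sum, Finset.mul_sum,
        ← Finset.sum_sub_distrib, ← Finset.sum_sub_distrib, ← Finset.sum_add_distrib]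
      apply Finset.sum_congr rfl; intro k hk; ring
    rw [Finset.sum_congr rfl hpt]
    rw [Finset.sum_add_distrib, Finset.sum_sub_distrib, Finset.sum_sub_distrib,
      ← Finset.sum_mul, ← Finset.sum_mul, ← Finset.sum_mul, ← Finset.sum_mul]
    ring
  rw [expand] at key
  linarith

private lemma hg_mgf (N K : ℕ) (hK : K ≤ N) (hN : 0 < N) (t : ℝ) (ht : 1 ≤ t) :
    ∀ m, ∑ k ∈ range (m + 1), hgA N K m k * t ^ k
      ≤ (N.descFactorial m : ℝ) * ((((N - K : ℕ) : ℝ) + K * t) / N) ^ m := by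
  have ht0 : (0 : ℝ) ≤ t := le_trans zero_le_one ht
  have hNR : (0 : ℝ) < N := by exact_mod_cast hN
  set q : ℝ := (((N - K : ℕ) : ℝ) + K * t) / N with hq
  have hq0 : 0 ≤ q := by
    apply div_nonneg _ (le_of_lt hNR)
    positivity
  intro m
  induction m with
  | zero => simp [hgA]
  | succ m ih =>
    by_cases hmN : N ≤ m
    · -- all terms vanish
      have hz : ∀ k ∈ range (m + 2), hgA N K (m + 1) k * t ^ k = 0 := by
        intro k _
        unfold hgA
        rcases le_or_gt k K with hkK | hkK
        · have : N - K < m + 1 - k := by omega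
          rw [Nat.descFactorial_eq_zero_iff_lt.2 this]
          simp
        · rw [Nat.descFactorial_eq_zero_iff_lt.2 hkK]
          simp
      rw [Finset.sum_eq_zero hz]
      positivity
    · push_neg at hmN
      have hmN' : m ≤ N := le_of_lt hmN
      set S : ℝ := ∑ k ∈ range (m + 1), hgA N K m k * t ^ k with hS
      set U : ℝ := ∑ k ∈ range (m + 1), hgA N K m k * ((k : ℝ) * t ^ k) with hU
      set D : ℝ := (N.descFactorial m : ℝ) with hD
      have hDpos : 0 < D := by
        rw [hD]
        have : N.descFactorial m ≠ 0 := by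
          intro h
          rw [Nat.descFactorial_eq_zero_iff_lt] at h
          omega
        exact_mod_cast Nat.pos_of_ne_zero this
      have hS0 : 0 ≤ S := by
        apply Finset.sum_nonneg
        intro k _
        exact mul_nonneg (hgA_nonneg _ _ _ _) (by positivity)
      -- sum of weights equals D
      have hsumw : ∑ k ∈ range (m + 1), hgA N K m k = D := by
        rw [hD]
        have := vandermonde_nat N K m hK
        rw [← this]
        push_cast [hgA]
        rfl
      -- mean identity
      have hmean : (N : ℝ) * (∑ k ∈ range (m + 1), hgA N K m k * (k : ℝ))
          = (K : ℝ) * m * D := by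
        have h := mean_nat N K m hK
        have h' : ((N : ℝ)) * ∑ k ∈ range (m + 1),
            (k : ℝ) * ((m.choose k : ℝ) * (K.descFactorial k : ℝ)
              * ((N - K).descFactorial (m - k) : ℝ))
            = (K : ℝ) * m * (N.descFactorial m : ℝ) := by
          exact_mod_cast congrArg (fun x : ℕ => (x : ℝ)) h
        rw [hD]
        rw [← h']
        congr 1
        apply Finset.sum_congr rfl
        intro k _
        unfold hgA
        ring
      -- Chebyshev
      have hcheb := cheb_sum (range (m + 1)) (fun k => hgA N K m k)
        (fun i _ => hgA_nonneg _ _ _ _) t ht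
      try simp only at hcheb
      rw [hsumw] at hcheb
      -- key: K*m*S ≤ N*U
      have hkey : (K : ℝ) * m * S ≤ (N : ℝ) * U := by
        have h1 : ((K : ℝ) * m * D) * S ≤ ((N : ℝ) * U) * D := by
          calc ((K : ℝ) * m * D) * S
              = (N : ℝ) * ((∑ k ∈ range (m + 1), hgA N K m k * (k : ℝ)) * S) := by
                rw [← hmean]; ring
            _ ≤ (N : ℝ) * (U * D) := by
                apply mul_le_mul_of_nonneg_left _ (le_of_lt hNR)
                exact hcheb
            _ = ((N : ℝ) * U) * D := by ring
        have := (mul_le_mul_iff_left₀ hDpos).1 (by linarith [h1] :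
          ((K : ℝ) * m * S) * D ≤ ((N : ℝ) * U) * D)
        exact this
      -- the recursion
      rw [hgA_rec_sum]
      have split : ∀ k ∈ range (m + 1),
          hgA N K m k * ((((N - K : ℕ) : ℝ) - ((m - k : ℕ) : ℝ)) * t ^ k
            + ((K : ℝ) - k) * t ^ (k + 1))
          = ((N : ℝ) - m) * (hgA N K m k * t ^ k)
            + (t - 1) * ((K : ℝ) * (hgA N K m k * t ^ k) - hgA N K m k * ((k : ℝ) * t ^ k)) := by
        intro k hk
        rw [mem_range] at hk
        have c1 : ((N - K : ℕ) : ℝ) = (N : ℝ) - K := by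
          push_cast [hK]; ring
        have c2 : ((m - k : ℕ) : ℝ) = (m : ℝ) - k := by
          push_cast [show k ≤ m by omega]; ring
        rw [c1, c2, pow_succ]
        ring
      have hsub1 : (∑ k ∈ range (m + 1),
          ((K : ℝ) * (hgA N K m k * t ^ k) - hgA N K m k * ((k : ℝ) * t ^ k)))
          = (K : ℝ) * S - U := by
        rw [Finset.sum_sub_distrib, ← Finset.mul_sum, ← hS, ← hU]
      rw [Finset.sum_congr rfl split, Finset.sum_add_distrib, ← Finset.mul_sum,
        ← Finset.mul_sum, hsub1, ← hS]
      -- now bound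
      have hbound : (K : ℝ) * S - U ≤ (K : ℝ) * ((N : ℝ) - m) / N * S := by
        rw [div_mul_eq_mul_div, le_div_iff₀ hNR]
        nlinarith [hkey]
      have ht1 : 0 ≤ t - 1 := by linarith
      have hNm : (0 : ℝ) ≤ (N : ℝ) - m := by
        have : (m : ℝ) ≤ N := by exact_mod_cast hmN'
        linarith
      calc ((N : ℝ) - m) * S + (t - 1) * ((K : ℝ) * S - U)
          ≤ ((N : ℝ) - m) * S + (t - 1) * ((K : ℝ) * ((N : ℝ) - m) / N * S) :=
            by nlinarith [mul_le_mul_of_nonneg_left hbound ht1]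
        _ = (((N : ℝ) - m) * q) * S := by
            rw [hq]
            have c1 : ((N - K : ℕ) : ℝ) = (N : ℝ) - K := by push_cast [hK]; ring
            rw [c1]
            field_simp
            ring
        _ ≤ (((N : ℝ) - m) * q) * (D * q ^ m) := by
            apply mul_le_mul_of_nonneg_left _ (mul_nonneg hNm hq0)
            rw [hS, hD] at *
            exact ih
        _ = (((N : ℝ) - m) * D) * q ^ (m + 1) := by ring
        _ = (N.descFactorial (m + 1) : ℝ) * q ^ (m + 1) := by
            rw [Nat.descFactorial_succ]
            push_cast [hmN']
            ring

private lemma hg_mgf_choose (N K M : ℕ) (hK : K ≤ N) (hN : 0 < N) (t : ℝ) (ht : 1 ≤ t) :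
    ∑ k ∈ range (M + 1), (K.choose k : ℝ) * ((N - K).choose (M - k) : ℝ) * t ^ k
      ≤ (N.choose M : ℝ) * ((((N - K : ℕ) : ℝ) + K * t) / N) ^ M := by
  have hfac : (0 : ℝ) < (M.factorial : ℝ) := by exact_mod_cast M.factorial_pos
  rw [← mul_le_mul_iff_right₀ hfac]
  have hgA_eq : ∀ k ∈ range (M + 1),
      (M.factorial : ℝ) * ((K.choose k : ℝ) * ((N - K).choose (M - k) : ℝ) * t ^ k)
        = hgA N K M k * t ^ k := by
    intro k hk
    rw [mem_range] at hk
    unfold hgA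
    rw [Nat.descFactorial_eq_factorial_mul_choose, Nat.descFactorial_eq_factorial_mul_choose,
      ← Nat.choose_mul_factorial_mul_factorial (show k ≤ M by omega)]
    push_cast
    ring
  rw [Finset.mul_sum, Finset.sum_congr rfl hgA_eq]
  calc ∑ k ∈ range (M + 1), hgA N K M k * t ^ k
      ≤ (N.descFactorial M : ℝ) * ((((N - K : ℕ) : ℝ) + K * t) / N) ^ M :=
        hg_mgf N K hK hN t ht M
    _ = (M.factorial : ℝ) * ((N.choose M : ℝ) * ((((N - K : ℕ) : ℝ) + K * t) / N) ^ M) := by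
        rw [Nat.descFactorial_eq_factorial_mul_choose]
        push_cast
        ring

private lemma choose_swap (n c m k : ℕ) (hc : c ≤ n) (hm : m ≤ n) (hkc : k ≤ c) (hkm : k ≤ m) :
    c.choose k * (n - c).choose (m - k) * n.choose c
      = m.choose k * (n - m).choose (c - k) * n.choose m := by
  have h1 := Nat.choose_mul (n := n) hkc
  have h2 := Nat.choose_mul (n := n) hkm
  have middle : (n - k).choose (c - k) * (n - c).choose (m - k)
      = (n - k).choose (m - k) * (n - m).choose (c - k) := by
    rcases le_or_gt ((c - k) + (m - k)) (n - k) with hle | hlt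
    · have e1 := Nat.choose_mul (n := n - k) (Nat.le_add_right (c - k) (m - k))
      have e2 := Nat.choose_mul (n := n - k) (Nat.le_add_left (m - k) (c - k))
      have s1 : (c - k) + (m - k) - (c - k) = m - k := by omega
      have s2 : (c - k) + (m - k) - (m - k) = c - k := by omega
      have s3 : n - k - (c - k) = n - c := by omega
      have s4 : n - k - (m - k) = n - m := by omega
      rw [s1, s3] at e1
      rw [s2, s4] at e2
      have hsymm : ((c - k) + (m - k)).choose (c - k) = ((c - k) + (m - k)).choose (m - k) :=
        Nat.choose_symm_add
      rw [← e1, ← e2, hsymm]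
    · have z1 : n - c < m - k := by omega
      have z2 : n - m < c - k := by omega
      rw [Nat.choose_eq_zero_of_lt z1, Nat.choose_eq_zero_of_lt z2]
      simp
  calc c.choose k * (n - c).choose (m - k) * n.choose c
      = (n.choose c * c.choose k) * (n - c).choose (m - k) := by ring
    _ = (n.choose k * (n - k).choose (c - k)) * (n - c).choose (m - k) := by rw [h1]
    _ = n.choose k * ((n - k).choose (c - k) * (n - c).choose (m - k)) := by ring
    _ = n.choose k * ((n - k).choose (m - k) * (n - m).choose (c - k)) := by rw [middle]
    _ = (n.choose k * (n - k).choose (m - k)) * (n - m).choose (c - k) := by ring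
    _ = (n.choose m * m.choose k) * (n - m).choose (c - k) := by rw [h2]
    _ = m.choose k * (n - m).choose (c - k) * n.choose m := by ring

/-- The hypergeometric pmf with population `N`, successes `K`, draws `m`. -/
noncomputable def hypergeomPMF (N K m k : ℕ) : ℝ :=
  if k ≤ m then (K.choose k * (N - K).choose (m - k) : ℝ) / (N.choose m : ℝ) else 0

private lemma pmf_nonneg (N K m k : ℕ) : 0 ≤ hypergeomPMF N K m k := by
  unfold hypergeomPMF
  split
  · positivity
  · exact le_refl 0

private lemma pmf_swap (n c : ℕ) (hc : c ≤ n) (k : ℕ) :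
    hypergeomPMF n c (n / 2) k
      = if k ≤ c then
          ((n / 2).choose k : ℝ) * ((n - n / 2).choose (c - k) : ℝ) / (n.choose c : ℝ)
        else 0 := by
  have hm : n / 2 ≤ n := Nat.div_le_self n 2
  unfold hypergeomPMF
  by_cases hkm : k ≤ n / 2 <;> by_cases hkc : k ≤ c
  · rw [if_pos hkm, if_pos hkc]
    rw [div_eq_div_iff (Nat.cast_ne_zero.2 (Nat.choose_pos hm).ne')
      (Nat.cast_ne_zero.2 (Nat.choose_pos hc).ne')]
    exact_mod_cast choose_swap n c (n / 2) k hc hm hkc hkm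
  · rw [if_pos hkm, if_neg hkc, Nat.choose_eq_zero_of_lt (by omega)]
    simp
  · rw [if_neg hkm, if_pos hkc, Nat.choose_eq_zero_of_lt (by omega)]
    simp
  · rw [if_neg hkm, if_neg hkc]

/-- Chvátal's tail bound for the hypergeometric distribution with draws `n/2`. -/
theorem chvatal_tail_bound (n c : ℕ) (hn : Even n) (hc : 0 < c) (hcn : c ≤ n)
    (a : ℝ) (ha : 0 < a) :
    ∑ k ∈ (Finset.range (n + 1)).filter (fun k : ℕ => (c : ℝ) / 2 + a < (k : ℝ)),
      hypergeomPMF n c (n / 2) k ≤ Real.exp (-2 * a ^ 2 / c) := by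
  obtain ⟨r, hr⟩ := hn
  have hm2 : n / 2 = r := by omega
  have hnm : n - n / 2 = r := by omega
  have hr1 : 1 ≤ r := by omega
  have hcR : (0 : ℝ) < c := by exact_mod_cast hc
  set lam : ℝ := 4 * a / c with hlamdef
  have hlam : 0 < lam := by positivity
  set t : ℝ := Real.exp lam with htdef
  have ht : 1 ≤ t := Real.one_le_exp (le_of_lt hlam)
  have ht0 : 0 ≤ t := le_trans zero_le_one ht
  set Cx : ℝ := Real.exp (-lam * ((c : ℝ) / 2 + a)) with hCx
  have hCx0 : 0 ≤ Cx := le_of_lt (Real.exp_pos _)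
  -- Step A/B/C : tail ≤ Cx * ∑_{k ≤ n} pmf k * t^k
  have stepABC : ∑ k ∈ (Finset.range (n + 1)).filter (fun k : ℕ => (c : ℝ) / 2 + a < (k : ℝ)),
        hypergeomPMF n c (n / 2) k
      ≤ Cx * ∑ k ∈ Finset.range (n + 1), hypergeomPMF n c (n / 2) k * t ^ k := by
    calc ∑ k ∈ (Finset.range (n + 1)).filter (fun k : ℕ => (c : ℝ) / 2 + a < (k : ℝ)),
          hypergeomPMF n c (n / 2) k
        ≤ ∑ k ∈ (Finset.range (n + 1)).filter (fun k : ℕ => (c : ℝ) / 2 + a < (k : ℝ)),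
          Cx * (hypergeomPMF n c (n / 2) k * t ^ k) := by
          apply Finset.sum_le_sum
          intro k hk
          rw [Finset.mem_filter] at hk
          have hk2 : (c : ℝ) / 2 + a < (k : ℝ) := hk.2
          have hE : Cx * t ^ k = Real.exp (lam * ((k : ℝ) - ((c : ℝ) / 2 + a))) := by
            rw [hCx, htdef, ← Real.exp_nat_mul, ← Real.exp_add]
            congr 1
            ring
          have h1E : 1 ≤ Cx * t ^ k := by
            rw [hE]
            apply Real.one_le_exp
            have : 0 ≤ (k : ℝ) - ((c : ℝ) / 2 + a) := by linarith
            positivity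
          calc hypergeomPMF n c (n / 2) k
              = hypergeomPMF n c (n / 2) k * 1 := by ring
            _ ≤ hypergeomPMF n c (n / 2) k * (Cx * t ^ k) :=
                mul_le_mul_of_nonneg_left h1E (pmf_nonneg _ _ _ _)
            _ = Cx * (hypergeomPMF n c (n / 2) k * t ^ k) := by ring
      _ ≤ ∑ k ∈ Finset.range (n + 1), Cx * (hypergeomPMF n c (n / 2) k * t ^ k) := by
          apply Finset.sum_le_sum_of_subset_of_nonneg (Finset.filter_subset _ _)
          intro k _ _
          have := pmf_nonneg n c (n / 2) k
          positivity
      _ = Cx * ∑ k ∈ Finset.range (n + 1), hypergeomPMF n c (n / 2) k * t ^ k := by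
          rw [Finset.mul_sum]
  -- Step D : rewrite via the swapped pmf
  have hnc : (0 : ℝ) < (n.choose c : ℝ) := by exact_mod_cast Nat.choose_pos hcn
  have stepD : ∑ k ∈ Finset.range (n + 1), hypergeomPMF n c (n / 2) k * t ^ k
      = ∑ k ∈ Finset.range (c + 1),
          ((n / 2).choose k : ℝ) * ((n - n / 2).choose (c - k) : ℝ) / (n.choose c : ℝ) * t ^ k := by
    have h1 : ∀ k ∈ Finset.range (n + 1),
        hypergeomPMF n c (n / 2) k * t ^ k
          = (if k ≤ c then
              ((n / 2).choose k : ℝ) * ((n - n / 2).choose (c - k) : ℝ) / (n.choose c : ℝ)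
            else 0) * t ^ k := by
      intro k _
      rw [pmf_swap n c hcn k]
    rw [Finset.sum_congr rfl h1]
    rw [← Finset.sum_subset (Finset.range_subset_range.2 (by omega : c + 1 ≤ n + 1))]
    · apply Finset.sum_congr rfl
      intro k hk
      rw [Finset.mem_range] at hk
      rw [if_pos (by omega : k ≤ c)]
    · intro k _ hk
      rw [Finset.mem_range, not_lt] at hk
      rw [if_neg (by omega)]
      ring
  -- Step E : the MGF bound
  have stepE : ∑ k ∈ Finset.range (c + 1),
      ((n / 2).choose k : ℝ) * ((n - n / 2).choose (c - k) : ℝ) / (n.choose c : ℝ) * t ^ k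
      ≤ ((1 + t) / 2) ^ c := by
    have hmgf := hg_mgf_choose n (n / 2) c (Nat.div_le_self n 2) (by omega) t ht
    have hq : (((n - n / 2 : ℕ) : ℝ) + (n / 2 : ℕ) * t) / (n : ℝ) = (1 + t) / 2 := by
      rw [hnm, hm2]
      have : (n : ℝ) = 2 * r := by
        rw [hr]; push_cast; ring
      rw [this]
      have hrR : (0 : ℝ) < r := by exact_mod_cast hr1
      field_simp
    rw [hq] at hmgf
    have hsum : ∑ k ∈ Finset.range (c + 1),
        ((n / 2).choose k : ℝ) * ((n - n / 2).choose (c - k) : ℝ) / (n.choose c : ℝ) * t ^ k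
        = (∑ k ∈ Finset.range (c + 1),
            ((n / 2).choose k : ℝ) * ((n - n / 2).choose (c - k) : ℝ) * t ^ k)
          / (n.choose c : ℝ) := by
      rw [Finset.sum_div]
      apply Finset.sum_congr rfl
      intro k _
      ring
    rw [hsum, div_le_iff₀ hnc]
    exact hmgf.trans_eq (mul_comm _ _)
  -- Step F : exponential bound on (1+t)/2
  have stepF : (1 + t) / 2 ≤ Real.exp (lam / 2 + lam ^ 2 / 8) := by
    have e1 : Real.exp (lam / 2) * Real.exp (lam / 2) = t := by
      rw [htdef, ← Real.exp_add]
      congr 1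
      ring
    have e2 : Real.exp (lam / 2) * Real.exp (-(lam / 2)) = 1 := by
      rw [← Real.exp_add]
      simp
    have hcosh := Real.cosh_le_exp_half_sq (lam / 2)
    rw [Real.cosh_eq] at hcosh
    have hmul := mul_le_mul_of_nonneg_left hcosh (le_of_lt (Real.exp_pos (lam / 2)))
    calc (1 + t) / 2
        = Real.exp (lam / 2) * ((Real.exp (lam / 2) + Real.exp (-(lam / 2))) / 2) := by
          rw [← mul_div_assoc, mul_add, e1, e2]
          ring
      _ ≤ Real.exp (lam / 2) * Real.exp ((lam / 2) ^ 2 / 2) := hmul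
      _ = Real.exp (lam / 2 + lam ^ 2 / 8) := by
          rw [← Real.exp_add]
          congr 1
          ring
  -- Step G
  have hb0 : (0 : ℝ) ≤ (1 + t) / 2 := by linarith
  have stepG : ((1 + t) / 2) ^ c ≤ Real.exp ((c : ℝ) * (lam / 2 + lam ^ 2 / 8)) := by
    calc ((1 + t) / 2) ^ c ≤ (Real.exp (lam / 2 + lam ^ 2 / 8)) ^ c :=
          pow_le_pow_left₀ hb0 stepF c
      _ = Real.exp ((c : ℝ) * (lam / 2 + lam ^ 2 / 8)) := (Real.exp_nat_mul _ c).symm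
  -- Final assembly
  calc ∑ k ∈ (Finset.range (n + 1)).filter (fun k : ℕ => (c : ℝ) / 2 + a < (k : ℝ)),
        hypergeomPMF n c (n / 2) k
      ≤ Cx * ∑ k ∈ Finset.range (n + 1), hypergeomPMF n c (n / 2) k * t ^ k := stepABC
    _ = Cx * ∑ k ∈ Finset.range (c + 1),
          ((n / 2).choose k : ℝ) * ((n - n / 2).choose (c - k) : ℝ) / (n.choose c : ℝ) * t ^ k := by
        rw [stepD]
    _ ≤ Cx * ((1 + t) / 2) ^ c := mul_le_mul_of_nonneg_left stepE hCx0
    _ ≤ Cx * Real.exp ((c : ℝ) * (lam / 2 + lam ^ 2 / 8)) :=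
        mul_le_mul_of_nonneg_left stepG hCx0
    _ = Real.exp (-lam * ((c : ℝ) / 2 + a) + (c : ℝ) * (lam / 2 + lam ^ 2 / 8)) := by
        rw [hCx, ← Real.exp_add]
    _ = Real.exp (-2 * a ^ 2 / c) := by
        congr 1
        rw [hlamdef]
        field_simp
        ring
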